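/- Let A be a real n×n matrix, let λ ≥ 0 and ε > 0, and let P be a real symmetric n×n matrix with inertia p (i.e., exactly p negative eigenvalues, n−p positive eigenvalues, and no zero eigenvalues, counted with multiplicity) such that AᵀP + PA ⪯ −2λP − εI. Then the matrix A + λI has exactly p complex eigenvalues (counted with algebraic multiplicity) with strictly positive real part and exactly n−p complex eigenvalues with strictly negative real part. -/

import Mathlib

open Matrix

/-- `M ⪯ N` iff `N - M` is positive semidefinite. -/
def matLE {m : Type*} [Fintype m] (M N : Matrix m m ℝ) : Prop := (N - M).PosSemidef

/-- A real symmetric matrix has inertia `p`: exactly `p` negative eigenvalues,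
`card m − p` positive eigenvalues, and no zero eigenvalues, counted with multiplicity
(as roots of the characteristic polynomial). -/
def hasInertia {m : Type*} [Fintype m] [DecidableEq m]
    (P : Matrix m m ℝ) (p : ℕ) : Prop :=
  Multiset.countP (fun μ : ℝ => μ < 0) P.charpoly.roots = p ∧
  Multiset.countP (fun μ : ℝ => 0 < μ) P.charpoly.roots = Fintype.card m - p ∧
  (0 : ℝ) ∉ P.charpoly.roots

/-- Number of complex eigenvalues (with algebraic multiplicity) of a real matrix
with strictly positive real part. -/
noncomputable def posReCount {m : Type*} [Fintype m] [DecidableEq m]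
    (A : Matrix m m ℝ) : ℕ :=
  Multiset.countP (fun μ : ℂ => 0 < μ.re) (A.map Complex.ofReal).charpoly.roots

/-- Number of complex eigenvalues (with algebraic multiplicity) of a real matrix
with strictly negative real part. -/
noncomputable def negReCount {m : Type*} [Fintype m] [DecidableEq m]
    (A : Matrix m m ℝ) : ℕ :=
  Multiset.countP (fun μ : ℂ => μ.re < 0) (A.map Complex.ofReal).charpoly.roots

/-- The quadratic form `xᵀ P x`. -/
def quadForm {m : Type*} [Fintype m] (P : Matrix m m ℝ) (x : m → ℝ) : ℝ :=
  x ⬝ᵥ P.mulVec x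

/-- Euclidean norm on `m → ℝ`. -/
noncomputable def enorm {m : Type*} [Fintype m] (x : m → ℝ) : ℝ :=
  Real.sqrt (x ⬝ᵥ x)

/-- `J` is the Jacobian of `f`. -/
def IsJacobianOf {n : ℕ} (J : (Fin n → ℝ) → Matrix (Fin n) (Fin n) ℝ)
    (f : (Fin n → ℝ) → (Fin n → ℝ)) : Prop :=
  ∀ x, HasFDerivAt f (LinearMap.toContinuousLinearMap ((J x).mulVecLin)) x

section LyapAuxSection
open Matrix Polynomial
namespace LyapAux

open scoped ComplexOrder

variable {n : ℕ}

lemma conj_form (Q : Matrix (Fin n) (Fin n) ℂ) (hQ : Q.IsHermitian) (a b : Fin n → ℂ) :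
    (starRingEnd ℂ) (star a ⬝ᵥ Q *ᵥ b) = star b ⬝ᵥ Q *ᵥ a := by
  have h1 : (starRingEnd ℂ) (star a ⬝ᵥ Q *ᵥ b) = star (Q *ᵥ b) ⬝ᵥ a := by
    rw [star_dotProduct]; simp
  rw [h1, star_mulVec, hQ.eq, dotProduct_mulVec]

lemma form_self_real (Q : Matrix (Fin n) (Fin n) ℂ) (hQ : Q.IsHermitian) (a : Fin n → ℂ) :
    (star a ⬝ᵥ Q *ᵥ a).im = 0 :=
  Complex.conj_eq_iff_im.mp (conj_form Q hQ a a)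

lemma smul_form_left (Q : Matrix (Fin n) (Fin n) ℂ) (c : ℂ) (a b : Fin n → ℂ) :
    star (c • a) ⬝ᵥ Q *ᵥ b = (starRingEnd ℂ) c * (star a ⬝ᵥ Q *ᵥ b) := by
  rw [star_smul, smul_dotProduct]; rfl

lemma smul_form_right (Q : Matrix (Fin n) (Fin n) ℂ) (c : ℂ) (a b : Fin n → ℂ) :
    star a ⬝ᵥ Q *ᵥ (c • b) = c * (star a ⬝ᵥ Q *ᵥ b) := by
  rw [mulVec_smul, dotProduct_smul]; rfl

lemma add_form_left (Q : Matrix (Fin n) (Fin n) ℂ) (a a' b : Fin n → ℂ) :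
    star (a + a') ⬝ᵥ Q *ᵥ b = star a ⬝ᵥ Q *ᵥ b + star a' ⬝ᵥ Q *ᵥ b := by
  rw [star_add, add_dotProduct]

lemma add_form_right (Q : Matrix (Fin n) (Fin n) ℂ) (a b b' : Fin n → ℂ) :
    star a ⬝ᵥ Q *ᵥ (b + b') = star a ⬝ᵥ Q *ᵥ b + star a ⬝ᵥ Q *ᵥ b' := by
  rw [mulVec_add, dotProduct_add]

lemma sub_form_left (Q : Matrix (Fin n) (Fin n) ℂ) (a a' b : Fin n → ℂ) :
    star (a - a') ⬝ᵥ Q *ᵥ b = star a ⬝ᵥ Q *ᵥ b - star a' ⬝ᵥ Q *ᵥ b := by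
  rw [star_sub, sub_dotProduct]

lemma sub_form_right (Q : Matrix (Fin n) (Fin n) ℂ) (a b b' : Fin n → ℂ) :
    star a ⬝ᵥ Q *ᵥ (b - b') = star a ⬝ᵥ Q *ᵥ b - star a ⬝ᵥ Q *ᵥ b' := by
  rw [mulVec_sub, dotProduct_sub]

/-- The linear functional `x ↦ star v ⬝ᵥ Q *ᵥ x`. -/
noncomputable def formFun (Q : Matrix (Fin n) (Fin n) ℂ) (v : Fin n → ℂ) :
    (Fin n → ℂ) →ₗ[ℂ] ℂ where
  toFun x := star v ⬝ᵥ Q *ᵥ x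
  map_add' := add_form_right Q v
  map_smul' c b := smul_form_right Q c v b

@[simp] lemma formFun_apply (Q : Matrix (Fin n) (Fin n) ℂ) (v x : Fin n → ℂ) :
    formFun Q v x = star v ⬝ᵥ Q *ᵥ x := rfl

/-- Key abstract lemma: a Hermitian form which strictly decreases along an
endomorphism whose eigenvalues (on an invariant subspace) have positive real
part is negative definite on that subspace. -/
lemma negdef_on_invariant (Q : Matrix (Fin n) (Fin n) ℂ) (hQ : Q.IsHermitian) :
    ∀ (d : ℕ) (f : Module.End ℂ (Fin n → ℂ)) (W : Submodule ℂ (Fin n → ℂ)),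
      Module.finrank ℂ W ≤ d →
      (∀ x ∈ W, f x ∈ W) →
      (∀ x ∈ W, x ≠ 0 → (star (f x) ⬝ᵥ Q *ᵥ x + star x ⬝ᵥ Q *ᵥ (f x)).re < 0) →
      (∀ (μ : ℂ) (x : Fin n → ℂ), x ∈ W → x ≠ 0 → f x = μ • x → 0 < μ.re) →
      ∀ x ∈ W, x ≠ 0 → (star x ⬝ᵥ Q *ᵥ x).re < 0 := by
  intro d
  induction d with
  | zero =>
    intro f W hrank _ _ _ x hx hx0
    exfalso
    have hW : W = ⊥ := Submodule.finrank_eq_zero.mp (Nat.le_zero.mp hrank)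
    exact hx0 (by simpa [hW] using hx)
  | succ d ih =>
    intro f W hrank hinv hdecr heig
    by_cases hW : W = ⊥
    · intro x hx hx0; exact absurd (by simpa [hW] using hx) hx0
    · haveI : Nontrivial (↥W) := Submodule.nontrivial_iff_ne_bot.mpr hW
      obtain ⟨μ, hμeig⟩ := Module.End.exists_eigenvalue (f.restrict hinv)
      obtain ⟨v₀, hv₀⟩ := hμeig.exists_hasEigenvector
      set v : Fin n → ℂ := (v₀ : Fin n → ℂ) with hv_def
      have hv0 : v ≠ 0 := by
        simpa [hv_def, Submodule.coe_eq_zero] using hv₀.right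
      have hvW : v ∈ W := v₀.2
      have hfv : f v = μ • v := by
        have := hv₀.apply_eq_smul
        have h2 := congrArg (Subtype.val) this
        simpa [LinearMap.restrict_coe_apply] using h2
      have hμre : 0 < μ.re := heig μ v hvW hv0 hfv
      set c : ℂ := star v ⬝ᵥ Q *ᵥ v with hc_def
      have hcim : c.im = 0 := form_self_real Q hQ v
      have hcre : c.re < 0 := by
        have h1 := hdecr v hvW hv0
        rw [hfv, smul_form_left, smul_form_right, ← hc_def] at h1
        have h2 : ((starRingEnd ℂ) μ * c + μ * c).re = 2 * μ.re * c.re := by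
          simp [Complex.add_re, Complex.mul_re, hcim]; ring
        rw [h2] at h1
        nlinarith
      have hc0 : c ≠ 0 := fun h => by simp [h] at hcre
      set ℓ := formFun Q v with hℓ_def
      have hℓv : ℓ v = c := rfl
      set S := W ⊓ LinearMap.ker ℓ with hS_def
      have hSW : S ≤ W := inf_le_left
      have hvS : v ∉ S := by
        intro h
        exact hc0 (by simpa [hℓv] using (LinearMap.mem_ker.mp h.2))
      have hrankS : Module.finrank ℂ S ≤ d := by
        have hlt : S < W := lt_of_le_of_ne hSW (fun h => hvS (h ▸ hvW))
        have := Submodule.finrank_lt_finrank_of_lt hlt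
        omega
      -- x ∈ S: both "cross" forms with v vanish
      have hcross : ∀ x ∈ S, star v ⬝ᵥ Q *ᵥ x = 0 ∧ star x ⬝ᵥ Q *ᵥ v = 0 := by
        intro x hx
        have h1 : star v ⬝ᵥ Q *ᵥ x = 0 := LinearMap.mem_ker.mp hx.2
        refine ⟨h1, ?_⟩
        rw [← conj_form Q hQ v x, h1, map_zero]
      set g : Module.End ℂ (Fin n → ℂ) :=
        f - LinearMap.smulRight (c⁻¹ • (ℓ ∘ₗ f)) v with hg_def
      have hg_apply : ∀ x, g x = f x - (c⁻¹ * ℓ (f x)) • v := by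
        intro x
        simp [hg_def, LinearMap.smulRight_apply, smul_smul]
      have hginv : ∀ x ∈ S, g x ∈ S := by
        intro x hx
        rw [hg_apply]
        refine Submodule.mem_inf.mpr ⟨W.sub_mem (hinv x (hSW hx)) (W.smul_mem _ hvW), ?_⟩
        rw [LinearMap.mem_ker, map_sub, LinearMap.map_smul, hℓv, smul_eq_mul]
        field_simp
        ring
      have hgdecr : ∀ x ∈ S, x ≠ 0 →
          (star (g x) ⬝ᵥ Q *ᵥ x + star x ⬝ᵥ Q *ᵥ (g x)).re < 0 := by
        intro x hx hx0
        obtain ⟨h1, h2⟩ := hcross x hx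
        have e : star (g x) ⬝ᵥ Q *ᵥ x + star x ⬝ᵥ Q *ᵥ (g x)
            = star (f x) ⬝ᵥ Q *ᵥ x + star x ⬝ᵥ Q *ᵥ (f x) := by
          rw [hg_apply, sub_form_left, sub_form_right, smul_form_left, smul_form_right,
            h1, h2]
          ring
        rw [e]
        exact hdecr x (hSW hx) hx0
      have hgeig : ∀ (μ' : ℂ) (x : Fin n → ℂ), x ∈ S → x ≠ 0 → g x = μ' • x → 0 < μ'.re := by
        intro μ' x hx hx0 hgx
        set a : ℂ := c⁻¹ * ℓ (f x) with ha_def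
        have hfx : f x = μ' • x + a • v := by
          have := hg_apply x
          rw [hgx] at this
          rw [← ha_def] at this
          linear_combination (norm := module) -this
        by_cases ha : a = 0
        · exact heig μ' x (hSW hx) hx0 (by rw [hfx, ha, zero_smul, add_zero])
        · by_cases hμμ : μ' = μ
          · rw [hμμ]; exact hμre
          · set k : ℂ := a / (μ' - μ) with hk_def
            have hμμ' : μ' - μ ≠ 0 := sub_ne_zero.mpr hμμ
            have hk0 : k ≠ 0 := div_ne_zero ha hμμ'
            set w := x + k • v with hw_def
            have hwW : w ∈ W := W.add_mem (hSW hx) (W.smul_mem _ hvW)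
            have hw0 : w ≠ 0 := by
              intro h
              have hxev : x = -(k • v) := by
                rw [hw_def] at h
                linear_combination (norm := module) h
              have h9 := LinearMap.mem_ker.mp hx.2
              rw [hxev] at h9
              simp only [map_neg, LinearMap.map_smul, hℓv, smul_eq_mul, neg_eq_zero] at h9
              exact (mul_ne_zero hk0 hc0) h9
            have hfw : f w = μ' • w := by
              have hs : a + k * μ = μ' * k := by
                have hkm : k * (μ' - μ) = a := by rw [hk_def]; exact div_mul_cancel₀ a hμμ'
                linear_combination -hkm
              rw [hw_def, map_add, LinearMap.map_smul, hfv, hfx]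
              have : μ' • x + a • v + k • μ • v = μ' • x + (a + k * μ) • v := by
                module
              rw [this, hs]
              module
            exact heig μ' w hwW hw0 hfw
      have negS := ih g S hrankS hginv hgdecr hgeig
      -- conclude on W
      intro x hxW hx0
      set a : ℂ := c⁻¹ * ℓ x with ha_def
      set s := x - a • v with hs_def
      have hsS : s ∈ S := by
        refine Submodule.mem_inf.mpr ⟨W.sub_mem hxW (W.smul_mem _ hvW), ?_⟩
        rw [LinearMap.mem_ker, map_sub, LinearMap.map_smul, hℓv, smul_eq_mul, ha_def]
        field_simp
        ring
      obtain ⟨h1, h2⟩ := hcross s hsS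
      have hx_eq : x = s + a • v := by rw [hs_def]; module
      have hexp : star x ⬝ᵥ Q *ᵥ x
          = star s ⬝ᵥ Q *ᵥ s + ((Complex.normSq a : ℂ)) * c := by
        rw [hx_eq, add_form_left, add_form_right, add_form_right, smul_form_left,
          smul_form_right, smul_form_left, smul_form_right, h1, h2, ← hc_def]
        have : (starRingEnd ℂ) a * a = (Complex.normSq a : ℂ) := by
          rw [mul_comm]; exact Complex.mul_conj a
        rw [← this]
        ring
      rw [hexp]
      have hre : (((Complex.normSq a : ℂ)) * c).re = Complex.normSq a * c.re := by
        simp [Complex.mul_re]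
      by_cases hs0 : s = 0
      · have ha0 : a ≠ 0 := by
          intro h
          apply hx0
          rw [hx_eq, hs0, h, zero_smul, add_zero]
        rw [hs0]
        simp only [Complex.add_re, hre]
        have : (star (0 : Fin n → ℂ) ⬝ᵥ Q *ᵥ (0 : Fin n → ℂ)) = 0 := by simp
        rw [this]
        have : 0 < Complex.normSq a := Complex.normSq_pos.mpr ha0
        simp only [Complex.zero_re, zero_add]
        exact mul_neg_of_pos_of_neg this hcre
      · have hneg := negS s hsS hs0
        simp only [Complex.add_re, hre]
        nlinarith [Complex.normSq_nonneg a]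


variable {n : ℕ}

lemma eval_charpoly {k : ℕ} {F : Type*} [Field F] (M : Matrix (Fin k) (Fin k) F) (μ : F) :
    M.charpoly.eval μ = (μ • (1 : Matrix (Fin k) (Fin k) F) - M).det := by
  rw [Matrix.charpoly, ← Polynomial.coe_evalRingHom, RingHom.map_det]
  congr 1
  ext i j
  by_cases h : i = j <;>
    simp [charmatrix_apply, h, Matrix.one_apply, Matrix.diagonal_apply, Matrix.smul_apply]

lemma exists_eigvec_of_root {k : ℕ} (M : Matrix (Fin k) (Fin k) ℂ) (μ : ℂ)
    (h : M.charpoly.IsRoot μ) : ∃ x : Fin k → ℂ, x ≠ 0 ∧ M *ᵥ x = μ • x := by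
  have hdet : (μ • (1 : Matrix (Fin k) (Fin k) ℂ) - M).det = 0 := by
    rw [← eval_charpoly]; exact h
  obtain ⟨x, hx0, hx⟩ := (Matrix.exists_mulVec_eq_zero_iff).mpr hdet
  refine ⟨x, hx0, ?_⟩
  rw [sub_mulVec, smul_mulVec, one_mulVec] at hx
  have := sub_eq_zero.mp hx
  rw [← this]

lemma exists_eigvec_of_charpoly_root {V : Type*} [AddCommGroup V] [Module ℂ V]
    [FiniteDimensional ℂ V] (f : Module.End ℂ V) (μ : ℂ)
    (h : f.charpoly.IsRoot μ) : ∃ x : V, x ≠ 0 ∧ f x = μ • x := by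
  set b := Module.finBasis ℂ V with hb
  have hc : (LinearMap.toMatrix b b f).charpoly = f.charpoly :=
    LinearMap.charpoly_toMatrix f b
  obtain ⟨y, hy0, hy⟩ := exists_eigvec_of_root _ μ (by rwa [hc])
  set x := b.equivFun.symm y with hx_def
  have hrx : (b.repr x : Fin _ → ℂ) = y := by
    have := b.equivFun.apply_symm_apply y
    rwa [Module.Basis.equivFun_apply] at this
  refine ⟨x, ?_, ?_⟩
  · intro h0
    apply hy0
    rw [h0] at hx_def
    have := congrArg b.equivFun hx_def
    rw [b.equivFun.apply_symm_apply] at this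
    simpa using this.symm
  · have h1 : (LinearMap.toMatrix b b f) *ᵥ (b.repr x) = b.repr (f x) :=
      LinearMap.toMatrix_mulVec_repr b b f x
    rw [hrx, hy] at h1
    apply b.equivFun.injective
    show b.equivFun (f x) = b.equivFun (μ • x)
    rw [Module.Basis.equivFun_apply, Module.Basis.equivFun_apply, ← h1, _root_.map_smul]
    ext i
    simp [hrx]

lemma charpoly_conj_units {k : ℕ} {F : Type*} [CommRing F]
    (M V W : Matrix (Fin k) (Fin k) F) (hVW : V * W = 1) :
    (V * M * W).charpoly = M.charpoly := by
  have hVWc : (C : F →+* F[X]).mapMatrix V * (C : F →+* F[X]).mapMatrix W = 1 := by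
    rw [← _root_.map_mul, hVW, _root_.map_one]
  have hs : Matrix.scalar (Fin k) (X : F[X]) = (X : F[X]) • (1 : Matrix (Fin k) (Fin k) F[X]) := by
    rw [Matrix.scalar_apply]
    apply Matrix.ext; intro i j
    by_cases h : i = j <;> simp [Matrix.diagonal_apply, h, Matrix.one_apply]
  have key : charmatrix (V * M * W)
      = (C : F →+* F[X]).mapMatrix V * charmatrix M * (C : F →+* F[X]).mapMatrix W := by
    rw [charmatrix, charmatrix, mul_sub, sub_mul, hs]
    congr 1
    · rw [mul_smul_comm, smul_mul_assoc, mul_one, hVWc]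
    · rw [← _root_.map_mul, ← _root_.map_mul]
  rw [Matrix.charpoly, key, det_mul, det_mul]
  have h1 : ((C : F →+* F[X]).mapMatrix V).det * ((C : F →+* F[X]).mapMatrix W).det = 1 := by
    rw [← det_mul, hVWc, det_one]
  calc ((C : F →+* F[X]).mapMatrix V).det * (charmatrix M).det
        * ((C : F →+* F[X]).mapMatrix W).det
      = ((C : F →+* F[X]).mapMatrix V).det * ((C : F →+* F[X]).mapMatrix W).det
        * (charmatrix M).det := by ring
    _ = (charmatrix M).det := by rw [h1, one_mul]

lemma charpoly_diagonal {k : ℕ} {F : Type*} [CommRing F] (v : Fin k → F) :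
    (Matrix.diagonal v).charpoly = ∏ i, (X - C (v i)) := by
  have : charmatrix (Matrix.diagonal v) = Matrix.diagonal (fun i => X - C (v i)) := by
    apply Matrix.ext; intro i j
    by_cases h : i = j
    · subst h; rw [charmatrix_apply_eq]; simp
    · rw [charmatrix_apply_ne _ _ _ h, Matrix.diagonal_apply_ne _ h, Matrix.diagonal_apply_ne _ h]
      simp
  rw [Matrix.charpoly, this, det_diagonal]


variable {n : ℕ}

/-! ### Complexification -/

/-- complexification of a real vector -/
def emb (x : Fin n → ℝ) : Fin n → ℂ := fun i => (x i : ℂ)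

lemma emb_ne_zero {x : Fin n → ℝ} (h : x ≠ 0) : emb x ≠ 0 := by
  intro h0
  apply h
  ext i
  have := congrFun h0 i
  simpa [emb] using this

lemma emb_smul (r : ℝ) (x : Fin n → ℝ) : emb (r • x) = (r : ℂ) • emb x := by
  ext i; simp [emb]

lemma map_mulVec (M : Matrix (Fin n) (Fin n) ℝ) (x : Fin n → ℝ) :
    (M.map Complex.ofReal) *ᵥ emb x = emb (M *ᵥ x) := by
  ext i
  simp [Matrix.mulVec, dotProduct, emb, Matrix.map_apply]

lemma conjTranspose_map_ofReal (M : Matrix (Fin n) (Fin n) ℝ) :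
    (M.map Complex.ofReal)ᴴ = Mᵀ.map Complex.ofReal := by
  ext i j
  simp [Matrix.conjTranspose_apply, Matrix.map_apply, Matrix.transpose_apply]

lemma isHermitian_map_ofReal {M : Matrix (Fin n) (Fin n) ℝ} (h : M.IsSymm) :
    (M.map Complex.ofReal).IsHermitian := by
  rw [Matrix.IsHermitian, conjTranspose_map_ofReal, h]

lemma posSemidef_map_ofReal {M : Matrix (Fin n) (Fin n) ℝ} (h : M.PosSemidef) :
    (M.map Complex.ofReal).PosSemidef := by
  obtain ⟨B, rfl⟩ : ∃ B : Matrix (Fin n) (Fin n) ℝ, M = Bᴴ * B := by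
    open scoped MatrixOrder in
    exact CStarAlgebra.nonneg_iff_eq_star_mul_self.mp h.nonneg
  have : ((Bᴴ * B).map Complex.ofReal)
      = (B.map Complex.ofReal)ᴴ * (B.map Complex.ofReal) := by
    rw [show ((Bᴴ * B).map Complex.ofReal)
        = (Bᴴ.map Complex.ofReal) * (B.map Complex.ofReal) from
      Matrix.map_mul (f := Complex.ofRealHom)]
    congr 1
    rw [conjTranspose_map_ofReal, Matrix.conjTranspose_eq_transpose_of_trivial]
  rw [this]
  exact Matrix.posSemidef_conjTranspose_mul_self _

/-! ### Characteristic polynomial of a real symmetric matrix -/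

lemma charpoly_roots_hermitian (P : Matrix (Fin n) (Fin n) ℝ) (hP : P.IsHermitian) :
    P.charpoly.roots = Finset.univ.val.map hP.eigenvalues := by
  have hspec := hP.spectral_theorem
  have hU : (hP.eigenvectorUnitary : Matrix (Fin n) (Fin n) ℝ)
      * (star (hP.eigenvectorUnitary : Matrix (Fin n) (Fin n) ℝ)) = 1 :=
    Unitary.mul_star_self_of_mem (hP.eigenvectorUnitary).2
  have h1 : P.charpoly = (Matrix.diagonal (RCLike.ofReal ∘ hP.eigenvalues)).charpoly := by
    conv_lhs => rw [hspec]
    exact charpoly_conj_units _ _ _ hU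
  have h2 : (Matrix.diagonal (RCLike.ofReal ∘ hP.eigenvalues) : Matrix (Fin n) (Fin n) ℝ)
      = Matrix.diagonal hP.eigenvalues := by
    congr 1
  rw [h1, h2, charpoly_diagonal]
  have h3 : (∏ i, (X - C (hP.eigenvalues i)))
      = ((Finset.univ.val.map hP.eigenvalues).map fun a => X - C a).prod := by
    rw [Multiset.map_map]
    rfl
  rw [h3, Polynomial.roots_multiset_prod_X_sub_C]

/-! ### charpoly of mulVecLin -/

lemma charpoly_mulVecLin {k : ℕ} (M : Matrix (Fin k) (Fin k) ℂ) :
    (Matrix.mulVecLin M).charpoly = M.charpoly := by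
  have h : LinearMap.toMatrix (Pi.basisFun ℂ (Fin k)) (Pi.basisFun ℂ (Fin k)) M.mulVecLin
      = M := by
    ext i j
    rw [LinearMap.toMatrix_apply]
    simp [Matrix.mulVecLin_apply, Matrix.mulVec_single]
  rw [← LinearMap.charpoly_toMatrix M.mulVecLin (Pi.basisFun ℂ (Fin k)), h]

/-! ### charpoly factorization along a complementary pair of invariant subspaces -/

lemma charpoly_restrict_mul {K V : Type*} [Field K] [AddCommGroup V] [Module K V]
    [FiniteDimensional K V]
    (f : Module.End K V) (W₁ W₂ : Submodule K V) (hc : IsCompl W₁ W₂)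
    (h₁ : ∀ x ∈ W₁, f x ∈ W₁) (h₂ : ∀ x ∈ W₂, f x ∈ W₂) :
    (f.restrict h₁).charpoly * (f.restrict h₂).charpoly = f.charpoly := by
  classical
  let F := f.restrict h₁
  let G := f.restrict h₂
  let ψ := F.prodMap G
  let e := Submodule.prodEquivOfIsCompl W₁ W₂ hc
  let bV := Module.Free.chooseBasis K W₁
  let bW := Module.Free.chooseBasis K W₂
  let b := bV.prod bW
  have hψ : ψ = e.symm.conj f := by
    apply b.ext
    simp only [Module.Basis.prod_apply, LinearMap.coe_inl, LinearMap.coe_inr, LinearMap.prodMap_apply,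
      LinearEquiv.conj_apply, LinearEquiv.symm_symm, Submodule.coe_prodEquivOfIsCompl,
      LinearMap.coe_comp, LinearEquiv.coe_coe, Function.comp_apply, LinearMap.coprod_apply,
      Submodule.coe_subtype, map_add, Sum.forall, Sum.elim_inl, map_zero,
      ZeroMemClass.coe_zero, add_zero, LinearEquiv.eq_symm_apply, and_self,
      Submodule.coe_prodEquivOfIsCompl', LinearMap.restrict_coe_apply, implies_true,
      Sum.elim_inr, zero_add, e, ψ, F, G, b]
  rw [← e.symm.charpoly_conj f, ← hψ]
  exact (LinearMap.charpoly_prodMap F G).symm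

/-- An eigen-equation inside a restricted endomorphism, pushed to the ambient space. -/
lemma restrict_root_eigvec {K : Type*} [Field K] {V : Type*} [AddCommGroup V] [Module K V]
    (f : Module.End K V) (W : Submodule K V) (hinv : ∀ x ∈ W, f x ∈ W)
    {x : ↥W} {μ : K} (hx : (f.restrict hinv) x = μ • x) :
    f (x : V) = μ • (x : V) := by
  have := congrArg (Subtype.val) hx
  simpa [LinearMap.restrict_coe_apply] using this


/-! ### sums in the form -/

lemma sum_dotProduct' {ι : Type*} (s : Finset ι) (a : ι → Fin n → ℂ) (y : Fin n → ℂ) :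
    (∑ j ∈ s, a j) ⬝ᵥ y = ∑ j ∈ s, a j ⬝ᵥ y := by
  simp only [dotProduct, Finset.sum_apply, Finset.sum_mul]
  exact Finset.sum_comm

lemma dotProduct_sum' {ι : Type*} (s : Finset ι) (a : Fin n → ℂ) (y : ι → Fin n → ℂ) :
    a ⬝ᵥ (∑ j ∈ s, y j) = ∑ j ∈ s, a ⬝ᵥ y j := by
  simp only [dotProduct, Finset.sum_apply, Finset.mul_sum]
  exact Finset.sum_comm

lemma sum_form_left {ι : Type*} (s : Finset ι) (Q : Matrix (Fin n) (Fin n) ℂ)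
    (a : ι → (Fin n → ℂ)) (b : Fin n → ℂ) :
    star (∑ j ∈ s, a j) ⬝ᵥ Q *ᵥ b = ∑ j ∈ s, star (a j) ⬝ᵥ Q *ᵥ b := by
  rw [star_sum, sum_dotProduct']

lemma sum_form_right {ι : Type*} (s : Finset ι) (Q : Matrix (Fin n) (Fin n) ℂ)
    (a : Fin n → ℂ) (b : ι → (Fin n → ℂ)) :
    star a ⬝ᵥ Q *ᵥ (∑ j ∈ s, b j) = ∑ j ∈ s, star a ⬝ᵥ Q *ᵥ (b j) := by
  rw [show Q *ᵥ (∑ j ∈ s, b j) = ∑ j ∈ s, Q *ᵥ b j from by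
    simpa only [Matrix.mulVecLin_apply] using map_sum Q.mulVecLin b s]
  exact dotProduct_sum' _ _ _

/-! ### complexified eigenvectors of a real symmetric matrix -/

section eig

variable (P : Matrix (Fin n) (Fin n) ℝ) (hP : P.IsHermitian)

/-- complexified eigenvector of a real symmetric matrix -/
noncomputable def wvec (i : Fin n) : Fin n → ℂ := emb (⇑(hP.eigenvectorBasis i))

lemma wvec_mul (i : Fin n) :
    (P.map Complex.ofReal) *ᵥ wvec P hP i = (hP.eigenvalues i : ℂ) • wvec P hP i := by
  rw [wvec, map_mulVec, hP.mulVec_eigenvectorBasis, emb_smul]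

lemma wvec_orth (i j : Fin n) :
    star (wvec P hP i) ⬝ᵥ wvec P hP j = if i = j then 1 else 0 := by
  have horth := hP.eigenvectorBasis.orthonormal
  rw [orthonormal_iff_ite] at horth
  have h1 := horth i j
  rw [PiLp.inner_apply] at h1
  have h2 : star (wvec P hP i) ⬝ᵥ wvec P hP j
      = ((∑ k, (hP.eigenvectorBasis i : EuclideanSpace ℝ (Fin n)) k
          * (hP.eigenvectorBasis j : EuclideanSpace ℝ (Fin n)) k : ℝ) : ℂ) := by
    rw [Complex.ofReal_sum]
    simp [wvec, emb, dotProduct, Complex.ofReal_mul]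
  rw [h2]
  simp only [RCLike.inner_apply, conj_trivial] at h1
  rw [show (∑ k, (hP.eigenvectorBasis i).ofLp k * (hP.eigenvectorBasis j).ofLp k)
      = ∑ k, (hP.eigenvectorBasis j).ofLp k * (hP.eigenvectorBasis i).ofLp k from
    Finset.sum_congr rfl (fun k _ => mul_comm _ _), h1]
  split <;> simp

lemma wvec_li : LinearIndependent ℂ (wvec P hP) := by
  rw [Fintype.linearIndependent_iff]
  intro g hg i
  have h1 : star (wvec P hP i) ⬝ᵥ (∑ j, g j • wvec P hP j) = g i := by
    rw [dotProduct_sum']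
    have : ∀ j, star (wvec P hP i) ⬝ᵥ (g j • wvec P hP j)
        = g j * (if i = j then 1 else 0) := by
      intro j
      rw [dotProduct_smul, wvec_orth]
      rfl
    simp only [this]
    simp
  rw [hg] at h1
  simpa using h1.symm

lemma span_form (pr : Fin n → Prop) [DecidablePred pr] (x : Fin n → ℂ)
    (hx : x ∈ Submodule.span ℂ (Set.range (fun j : {i // pr i} => wvec P hP j.1)))
    (hx0 : x ≠ 0) :
    ∃ c : {i // pr i} → ℂ, (∃ j, c j ≠ 0) ∧
      (star x ⬝ᵥ (P.map Complex.ofReal) *ᵥ x).re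
        = ∑ j, Complex.normSq (c j) * hP.eigenvalues j.1 := by
  obtain ⟨c, hc⟩ := (Submodule.mem_span_range_iff_exists_fun ℂ).mp hx
  refine ⟨c, ?_, ?_⟩
  · by_contra hall
    push_neg at hall
    apply hx0
    rw [← hc]
    simp [hall]
  · have hterm : ∀ j k : {i // pr i},
        star (wvec P hP j.1) ⬝ᵥ (P.map Complex.ofReal) *ᵥ (wvec P hP k.1)
          = if j = k then (hP.eigenvalues k.1 : ℂ) else 0 := by
      intro j k
      rw [wvec_mul, dotProduct_smul, wvec_orth]
      have : (j.1 = k.1) = (j = k) := by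
        simp [Subtype.ext_iff]
      by_cases h : j = k
      · simp [h]
      · have h' : j.1 ≠ k.1 := fun hh => h (Subtype.ext hh)
        simp [h, h']
    have hmain : star x ⬝ᵥ (P.map Complex.ofReal) *ᵥ x
        = ∑ j, ((Complex.normSq (c j) : ℂ) * (hP.eigenvalues j.1 : ℂ)) := by
      rw [← hc, sum_form_left]
      apply Finset.sum_congr rfl
      intro j _
      rw [smul_form_left, sum_form_right]
      have : ∀ k : {i // pr i},
          star (wvec P hP j.1) ⬝ᵥ (P.map Complex.ofReal) *ᵥ (c k • wvec P hP k.1)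
            = c k * (if j = k then (hP.eigenvalues k.1 : ℂ) else 0) := by
        intro k
        rw [smul_form_right, hterm]
      simp only [this, mul_ite, mul_zero, Finset.sum_ite_eq, Finset.mem_univ, if_true]
      rw [← mul_assoc]
      congr 1
      rw [mul_comm]
      exact Complex.mul_conj _
    rw [hmain, Complex.re_sum]
    apply Finset.sum_congr rfl
    intro j _
    rw [← Complex.ofReal_mul]
    simp

end eig

/-! ### generalized eigenspace machinery -/

lemma iSup_maxGen_invariant (f : Module.End ℂ (Fin n → ℂ)) (pr : ℂ → Prop) :
    ∀ x ∈ (⨆ μ : {μ : ℂ // pr μ}, f.maxGenEigenspace μ.1),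
      f x ∈ (⨆ μ : {μ : ℂ // pr μ}, f.maxGenEigenspace μ.1) := by
  have h : (⨆ μ : {μ : ℂ // pr μ}, f.maxGenEigenspace μ.1)
      ≤ Submodule.comap f (⨆ μ : {μ : ℂ // pr μ}, f.maxGenEigenspace μ.1) := by
    apply iSup_le
    intro μ x hx
    exact Submodule.mem_comap.mpr (Submodule.mem_iSup_of_mem μ
      ((Module.End.mapsTo_maxGenEigenspace_of_comm (Commute.refl f) μ.1) hx))
  intro x hx
  exact h hx

lemma mem_maxGen_of_eig (f : Module.End ℂ (Fin n → ℂ)) {μ : ℂ} {x : Fin n → ℂ}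
    (hfx : f x = μ • x) : x ∈ f.maxGenEigenspace μ := by
  rw [Module.End.mem_maxGenEigenspace]
  refine ⟨1, ?_⟩
  simp [LinearMap.sub_apply, hfx]

lemma eig_mem_iSup_pred (f : Module.End ℂ (Fin n → ℂ)) (pr : ℂ → Prop) {μ' : ℂ}
    {x : Fin n → ℂ}
    (hx : x ∈ ⨆ μ : {μ : ℂ // pr μ}, f.maxGenEigenspace μ.1) (hx0 : x ≠ 0)
    (hfx : f x = μ' • x) : pr μ' := by
  by_contra hnot
  have hmem : x ∈ f.maxGenEigenspace μ' := mem_maxGen_of_eig f hfx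
  have hdisj := (Module.End.independent_maxGenEigenspace f) μ'
  have hle : (⨆ μ : {μ : ℂ // pr μ}, f.maxGenEigenspace μ.1)
      ≤ ⨆ (j) (_ : j ≠ μ'), f.maxGenEigenspace j := by
    apply iSup_le
    intro μ
    exact le_iSup₂_of_le μ.1 (fun h => hnot (h ▸ μ.2)) le_rfl
  exact hx0 (Submodule.disjoint_def.mp (hdisj.mono_right hle) x hmem hx)

lemma maxGen_eq_bot_of_no_eigvec (f : Module.End ℂ (Fin n → ℂ)) (μ : ℂ)
    (h : ∀ x : Fin n → ℂ, x ≠ 0 → f x ≠ μ • x) : f.maxGenEigenspace μ = ⊥ := by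
  by_contra hne
  have hgen : f.genEigenspace μ (Module.End.maxGenEigenspaceIndex f μ) ≠ ⊥ := by
    rw [← Module.End.maxGenEigenspace_eq]
    exact hne
  have heig : f.HasEigenvalue μ := Module.End.hasEigenvalue_of_hasGenEigenvalue hgen
  obtain ⟨v, hv⟩ := heig.exists_hasEigenvector
  exact h v hv.right hv.apply_eq_smul


lemma eig_form_re (Q : Matrix (Fin n) (Fin n) ℂ) (hQ : Q.IsHermitian) (μ : ℂ)
    (x : Fin n → ℂ) :
    (star (μ • x) ⬝ᵥ Q *ᵥ x + star x ⬝ᵥ Q *ᵥ (μ • x)).re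
      = 2 * μ.re * (star x ⬝ᵥ Q *ᵥ x).re := by
  rw [smul_form_left, smul_form_right]
  have hcim := form_self_real Q hQ x
  simp [Complex.add_re, Complex.mul_re, hcim]
  ring

end LyapAux

end LyapAuxSection

open scoped ComplexOrder
open LyapAux Polynomial

set_option maxHeartbeats 2000000 in
/-- strict p-dominance LMI implies spectral splitting of A + λI. -/
theorem lmi_dominance_implies_spectral_splitting {n : ℕ}
    (A P : Matrix (Fin n) (Fin n) ℝ) (p : ℕ) (lam eps : ℝ)
    (hlam : 0 ≤ lam) (heps : 0 < eps)
    (hPsymm : P.IsSymm) (hPinertia : hasInertia P p)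
    (hLMI : matLE (Aᵀ * P + P * A)
      (-((2 * lam) • P) - eps • (1 : Matrix (Fin n) (Fin n) ℝ))) :
    posReCount (A + lam • (1 : Matrix (Fin n) (Fin n) ℝ)) = p ∧
    negReCount (A + lam • (1 : Matrix (Fin n) (Fin n) ℝ)) = n - p := by
  classical
  obtain ⟨hcneg, hcpos, hc0root⟩ := hPinertia
  have hPh : P.IsHermitian := by
    rw [Matrix.IsHermitian, Matrix.conjTranspose_eq_transpose_of_trivial]
    exact hPsymm
  set ev := hPh.eigenvalues with hev
  have rootsP := charpoly_roots_hermitian P hPh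
  rw [rootsP, Multiset.countP_map] at hcneg hcpos
  rw [rootsP] at hc0root
  have hev0 : ∀ i, ev i ≠ 0 := by
    intro i h
    apply hc0root
    rw [Multiset.mem_map]
    exact ⟨i, by simp, h⟩
  have hnp : Fintype.card {i // ev i < 0} = p := by
    rw [Fintype.card_subtype, ← hcneg]
    rfl
  have hnq : Fintype.card {i // 0 < ev i} = n - p := by
    have h := hcpos
    rw [show Fintype.card (Fin n) = n from by simp] at h
    rw [Fintype.card_subtype, ← h]
    rfl
  have hsplit : Fintype.card {i // ev i < 0} + Fintype.card {i // 0 < ev i} = n := by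
    rw [Fintype.card_subtype, Fintype.card_subtype]
    have h := Finset.card_filter_add_card_filter_not
      (s := (Finset.univ : Finset (Fin n))) (p := fun i => ev i < 0)
    have h2 : Finset.filter (fun i => ¬ ev i < 0) Finset.univ
        = Finset.filter (fun i => 0 < ev i) Finset.univ := by
      apply Finset.filter_congr
      intro i _
      simp only [not_lt, decide_eq_true_eq]
      constructor
      · intro hh; exact lt_of_le_of_ne hh (Ne.symm (hev0 i))
      · intro hh; exact le_of_lt hh
    rw [h2] at h
    simpa using h
  -- complexified matrices
  set B := A + lam • (1 : Matrix (Fin n) (Fin n) ℝ) with hB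
  set Bc := B.map Complex.ofReal with hBc
  set Pc := P.map Complex.ofReal with hPc
  have hPcH : Pc.IsHermitian := isHermitian_map_ofReal hPsymm
  set Rm := (-((2 * lam) • P) - eps • (1 : Matrix (Fin n) (Fin n) ℝ)) - (Aᵀ * P + P * A)
    with hRm
  have hRpsd : Rm.PosSemidef := hLMI
  have hBt : Bᵀ = Aᵀ + lam • (1 : Matrix (Fin n) (Fin n) ℝ) := by
    rw [hB, Matrix.transpose_add, Matrix.transpose_smul, Matrix.transpose_one]
  have hBPB : Bᵀ * P + P * B = -(eps • (1 : Matrix (Fin n) (Fin n) ℝ)) - Rm := by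
    rw [hBt, hB, hRm, add_mul, mul_add, Matrix.smul_mul, Matrix.mul_smul, one_mul, mul_one]
    module
  have hmul : ∀ X Y : Matrix (Fin n) (Fin n) ℝ,
      (X * Y).map Complex.ofReal = X.map Complex.ofReal * Y.map Complex.ofReal :=
    fun X Y => Matrix.map_mul (f := Complex.ofRealHom)
  -- complexified quadratic inequality
  have hkey : ∀ x : Fin n → ℂ, x ≠ 0 →
      (star (Bc *ᵥ x) ⬝ᵥ Pc *ᵥ x + star x ⬝ᵥ Pc *ᵥ (Bc *ᵥ x)).re < 0 := by
    intro x hx0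
    have h1 : star (Bc *ᵥ x) ⬝ᵥ Pc *ᵥ x + star x ⬝ᵥ Pc *ᵥ (Bc *ᵥ x)
        = star x ⬝ᵥ ((Bcᴴ * Pc + Pc * Bc) *ᵥ x) := by
      rw [Matrix.add_mulVec, dotProduct_add, ← Matrix.mulVec_mulVec,
        ← Matrix.mulVec_mulVec]
      congr 1
      rw [Matrix.star_mulVec, ← Matrix.dotProduct_mulVec]
    have h2 : Bcᴴ * Pc + Pc * Bc = (Bᵀ * P + P * B).map Complex.ofReal := by
      rw [Matrix.map_add Complex.ofReal Complex.ofReal_add, hmul, hmul, hBc, hPc,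
        conjTranspose_map_ofReal]
    have h3 : (Bᵀ * P + P * B).map Complex.ofReal
        = -((eps : ℂ) • (1 : Matrix (Fin n) (Fin n) ℂ)) - Rm.map Complex.ofReal := by
      rw [hBPB, Matrix.map_sub Complex.ofReal Complex.ofReal_sub]
      congr 1
      ext i j
      by_cases h : i = j <;>
        simp [Matrix.map_apply, Matrix.one_apply, h]
    rw [h1, h2, h3]
    rw [Matrix.sub_mulVec, dotProduct_sub, Matrix.neg_mulVec, dotProduct_neg,
      Matrix.smul_mulVec, Matrix.one_mulVec, dotProduct_smul]
    have hxx : (star x ⬝ᵥ x) = ((∑ i, Complex.normSq (x i) : ℝ) : ℂ) := by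
      rw [Complex.ofReal_sum]
      apply Finset.sum_congr rfl
      intro i _
      rw [Pi.star_apply, mul_comm]
      exact (Complex.mul_conj _)
    have hxpos : 0 < ∑ i, Complex.normSq (x i) := by
      obtain ⟨i, hi⟩ := Function.ne_iff.mp hx0
      exact Finset.sum_pos' (fun j _ => Complex.normSq_nonneg _)
        ⟨i, Finset.mem_univ _, Complex.normSq_pos.mpr (by simpa using hi)⟩
    have hRcpsd : (Rm.map Complex.ofReal).PosSemidef := posSemidef_map_ofReal hRpsd
    have hRcre : 0 ≤ (star x ⬝ᵥ (Rm.map Complex.ofReal) *ᵥ x).re := by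
      have := hRcpsd.re_dotProduct_nonneg x
      simpa [RCLike.re_to_complex] using this
    rw [Complex.sub_re, Complex.neg_re]
    have : ((eps : ℂ) • (star x ⬝ᵥ x)).re = eps * (∑ i, Complex.normSq (x i)) := by
      rw [hxx, smul_eq_mul, ← Complex.ofReal_mul, Complex.ofReal_re]
    rw [this]
    nlinarith
  -- endomorphism and spectral subspaces
  set T : Module.End ℂ (Fin n → ℂ) := Bc.mulVecLin with hT
  have hkey' : ∀ x : Fin n → ℂ, x ≠ 0 →
      (star (T x) ⬝ᵥ Pc *ᵥ x + star x ⬝ᵥ Pc *ᵥ (T x)).re < 0 := by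
    intro x hx
    have : T x = Bc *ᵥ x := rfl
    rw [this]
    exact hkey x hx
  set Eplus := ⨆ μ : {μ : ℂ // 0 < μ.re}, T.maxGenEigenspace μ.1 with hEplus
  set Eminus := ⨆ μ : {μ : ℂ // μ.re < 0}, T.maxGenEigenspace μ.1 with hEminus
  have hinvp : ∀ x ∈ Eplus, T x ∈ Eplus := iSup_maxGen_invariant T _
  have hinvm : ∀ x ∈ Eminus, T x ∈ Eminus := iSup_maxGen_invariant T _
  have heigp : ∀ (μ : ℂ) (x : Fin n → ℂ), x ∈ Eplus → x ≠ 0 → T x = μ • x → 0 < μ.re :=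
    fun μ x hx hx0 hfx => eig_mem_iSup_pred T _ hx hx0 hfx
  have heigm : ∀ (μ : ℂ) (x : Fin n → ℂ), x ∈ Eminus → x ≠ 0 → T x = μ • x → μ.re < 0 :=
    fun μ x hx hx0 hfx => eig_mem_iSup_pred T _ hx hx0 hfx
  -- form is negative definite on Eplus
  have hnegdefp : ∀ x ∈ Eplus, x ≠ 0 → (star x ⬝ᵥ Pc *ᵥ x).re < 0 :=
    negdef_on_invariant Pc hPcH (Module.finrank ℂ Eplus) T Eplus le_rfl hinvp
      (fun x _ hx0 => hkey' x hx0) heigp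
  -- form is positive definite on Eminus
  have hposdefm : ∀ x ∈ Eminus, x ≠ 0 → 0 < (star x ⬝ᵥ Pc *ᵥ x).re := by
    have hQm : (-Pc).IsHermitian := hPcH.neg
    have hinvm' : ∀ x ∈ Eminus, (-T) x ∈ Eminus := by
      intro x hx
      rw [LinearMap.neg_apply]
      exact Eminus.neg_mem (hinvm x hx)
    have hdecr' : ∀ x ∈ Eminus, x ≠ 0 →
        (star ((-T) x) ⬝ᵥ (-Pc) *ᵥ x + star x ⬝ᵥ (-Pc) *ᵥ ((-T) x)).re < 0 := by
      intro x _ hx0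
      have heq : star ((-T) x) ⬝ᵥ (-Pc) *ᵥ x + star x ⬝ᵥ (-Pc) *ᵥ ((-T) x)
          = star (T x) ⬝ᵥ Pc *ᵥ x + star x ⬝ᵥ Pc *ᵥ (T x) := by
        rw [LinearMap.neg_apply, Matrix.neg_mulVec, Matrix.mulVec_neg, Matrix.neg_mulVec]
        simp only [star_neg, neg_dotProduct, dotProduct_neg, neg_neg]
      rw [heq]
      exact hkey' x hx0
    have heig' : ∀ (μ : ℂ) (x : Fin n → ℂ), x ∈ Eminus → x ≠ 0 → (-T) x = μ • x
        → 0 < μ.re := by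
      intro μ x hx hx0 hfx
      have : T x = (-μ) • x := by
        rw [LinearMap.neg_apply] at hfx
        have := neg_eq_iff_eq_neg.mp hfx
        rw [this, neg_smul]
      have := heigm (-μ) x hx hx0 this
      simpa using this
    have := negdef_on_invariant (-Pc) hQm (Module.finrank ℂ Eminus) (-T) Eminus le_rfl
      hinvm' hdecr' heig'
    intro x hx hx0
    have h := this x hx hx0
    rw [Matrix.neg_mulVec, dotProduct_neg, Complex.neg_re] at h
    linarith
  -- disjointness and complementarity
  have hdisj : Disjoint Eplus Eminus := by
    rw [Submodule.disjoint_def]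
    intro x hxp hxm
    by_contra hx0
    linarith [hnegdefp x hxp hx0, hposdefm x hxm hx0]
  have hsuptop : Eplus ⊔ Eminus = ⊤ := by
    rw [eq_top_iff, ← Module.End.iSup_maxGenEigenspace_eq_top T]
    apply iSup_le
    intro μ
    rcases lt_trichotomy μ.re 0 with h | h | h
    · exact le_sup_of_le_right (le_iSup (fun ν : {ν : ℂ // ν.re < 0} =>
        T.maxGenEigenspace ν.1) ⟨μ, h⟩)
    · have hbot : T.maxGenEigenspace μ = ⊥ := by
        apply maxGen_eq_bot_of_no_eigvec
        intro x hx0 hfx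
        have h1 := hkey' x hx0
        rw [hfx] at h1
        rw [eig_form_re Pc hPcH μ x, h] at h1
        simp at h1
      rw [hbot]
      exact bot_le
    · exact le_sup_of_le_left (le_iSup (fun ν : {ν : ℂ // 0 < ν.re} =>
        T.maxGenEigenspace ν.1) ⟨μ, h⟩)
  have hcompl : IsCompl Eplus Eminus := ⟨hdisj, codisjoint_iff.mpr hsuptop⟩
  have hambient : Module.finrank ℂ (Fin n → ℂ) = n := Module.finrank_fin_fun ℂ
  have hdim : Module.finrank ℂ Eplus + Module.finrank ℂ Eminus = n := by
    have h := Submodule.finrank_sup_add_finrank_inf_eq Eplus Eminus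
    rw [hsuptop, hdisj.eq_bot, finrank_top, finrank_bot, add_zero, hambient] at h
    omega
  -- characteristic polynomial factorization
  have hfact := charpoly_restrict_mul T Eplus Eminus hcompl hinvp hinvm
  set F := T.restrict hinvp with hF
  set G := T.restrict hinvm with hG
  have hchar : Bc.charpoly = F.charpoly * G.charpoly := by
    rw [hfact]
    exact (LyapAux.charpoly_mulVecLin Bc).symm
  have hFroots : ∀ ζ ∈ F.charpoly.roots, 0 < ζ.re := by
    intro ζ hζ
    have hroot : F.charpoly.IsRoot ζ :=
      (Polynomial.mem_roots (F.charpoly_monic.ne_zero)).mp hζ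
    obtain ⟨x₀, hx00, hx0e⟩ := exists_eigvec_of_charpoly_root F ζ hroot
    have hxne : (x₀ : Fin n → ℂ) ≠ 0 := by
      simpa [Submodule.coe_eq_zero] using hx00
    exact heigp ζ x₀ x₀.2 hxne (restrict_root_eigvec T Eplus hinvp hx0e)
  have hGroots : ∀ ζ ∈ G.charpoly.roots, ζ.re < 0 := by
    intro ζ hζ
    have hroot : G.charpoly.IsRoot ζ :=
      (Polynomial.mem_roots (G.charpoly_monic.ne_zero)).mp hζ
    obtain ⟨x₀, hx00, hx0e⟩ := exists_eigvec_of_charpoly_root G ζ hroot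
    have hxne : (x₀ : Fin n → ℂ) ≠ 0 := by
      simpa [Submodule.coe_eq_zero] using hx00
    exact heigm ζ x₀ x₀.2 hxne (restrict_root_eigvec T Eminus hinvm hx0e)
  have hFcard : Multiset.card F.charpoly.roots = Module.finrank ℂ Eplus := by
    rw [Polynomial.splits_iff_card_roots.mp (IsAlgClosed.splits F.charpoly),
      LinearMap.charpoly_natDegree]
  have hGcard : Multiset.card G.charpoly.roots = Module.finrank ℂ Eminus := by
    rw [Polynomial.splits_iff_card_roots.mp (IsAlgClosed.splits G.charpoly),
      LinearMap.charpoly_natDegree]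
  have hrootsmul : Bc.charpoly.roots = F.charpoly.roots + G.charpoly.roots := by
    rw [hchar, Polynomial.roots_mul
      (mul_ne_zero F.charpoly_monic.ne_zero G.charpoly_monic.ne_zero)]
  have hposcount : posReCount B = Module.finrank ℂ Eplus := by
    unfold posReCount
    rw [← hBc, hrootsmul, Multiset.countP_add,
      Multiset.countP_eq_card.mpr (fun a ha => hFroots a ha),
      Multiset.countP_eq_zero.mpr (fun a ha => not_lt.mpr (le_of_lt (hGroots a ha))),
      add_zero, hFcard]
  have hnegcount : negReCount B = Module.finrank ℂ Eminus := by
    unfold negReCount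
    rw [← hBc, hrootsmul, Multiset.countP_add,
      Multiset.countP_eq_zero.mpr (fun a ha => not_lt.mpr (le_of_lt (hFroots a ha))),
      Multiset.countP_eq_card.mpr (fun a ha => hGroots a ha),
      zero_add, hGcard]
  -- span subspaces from eigenvectors of P
  set Wp := Submodule.span ℂ (Set.range (fun j : {i // 0 < ev i} => wvec P hPh j.1)) with hWp
  set Wm := Submodule.span ℂ (Set.range (fun j : {i // ev i < 0} => wvec P hPh j.1)) with hWm
  have hWp_rank : Module.finrank ℂ Wp = Fintype.card {i // 0 < ev i} :=
    finrank_span_eq_card ((wvec_li P hPh).comp Subtype.val Subtype.val_injective)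
  have hWm_rank : Module.finrank ℂ Wm = Fintype.card {i // ev i < 0} :=
    finrank_span_eq_card ((wvec_li P hPh).comp Subtype.val Subtype.val_injective)
  have hWp_pos : ∀ x ∈ Wp, x ≠ 0 → 0 < (star x ⬝ᵥ Pc *ᵥ x).re := by
    intro x hx hx0
    obtain ⟨c, ⟨j0, hj0⟩, hre⟩ := span_form P hPh _ x hx hx0
    rw [hPc, hre]
    exact Finset.sum_pos' (fun j _ => mul_nonneg (Complex.normSq_nonneg _) (le_of_lt j.2))
      ⟨j0, Finset.mem_univ _, mul_pos (Complex.normSq_pos.mpr hj0) j0.2⟩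
  have hWm_neg : ∀ x ∈ Wm, x ≠ 0 → (star x ⬝ᵥ Pc *ᵥ x).re < 0 := by
    intro x hx hx0
    obtain ⟨c, ⟨j0, hj0⟩, hre⟩ := span_form P hPh _ x hx hx0
    rw [hPc, hre]
    have := Finset.sum_pos' (f := fun j : {i // ev i < 0} => Complex.normSq (c j) * (-ev j.1))
      (fun j _ => mul_nonneg (Complex.normSq_nonneg _) (by linarith [j.2]))
      ⟨j0, Finset.mem_univ _, mul_pos (Complex.normSq_pos.mpr hj0) (by linarith [j0.2])⟩
    have heq : ∑ j : {i // ev i < 0}, Complex.normSq (c j) * (-ev j.1)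
        = -∑ j : {i // ev i < 0}, Complex.normSq (c j) * ev j.1 := by
      rw [← Finset.sum_neg_distrib]
      apply Finset.sum_congr rfl
      intro j _
      ring
    rw [heq] at this
    linarith
  -- dimension bounds
  have hdisj1 : Disjoint Eplus Wp := by
    rw [Submodule.disjoint_def]
    intro x h1 h2
    by_contra hx0
    linarith [hnegdefp x h1 hx0, hWp_pos x h2 hx0]
  have hdisj2 : Disjoint Eminus Wm := by
    rw [Submodule.disjoint_def]
    intro x h1 h2
    by_contra hx0
    linarith [hposdefm x h1 hx0, hWm_neg x h2 hx0]
  have hle1 : Module.finrank ℂ Eplus + Module.finrank ℂ Wp ≤ n := by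
    have h := Submodule.finrank_sup_add_finrank_inf_eq Eplus Wp
    rw [hdisj1.eq_bot, finrank_bot, add_zero] at h
    rw [← h]
    calc Module.finrank ℂ ↥(Eplus ⊔ Wp) ≤ Module.finrank ℂ (Fin n → ℂ) :=
          Submodule.finrank_le _
      _ = n := hambient
  have hle2 : Module.finrank ℂ Eminus + Module.finrank ℂ Wm ≤ n := by
    have h := Submodule.finrank_sup_add_finrank_inf_eq Eminus Wm
    rw [hdisj2.eq_bot, finrank_bot, add_zero] at h
    rw [← h]
    calc Module.finrank ℂ ↥(Eminus ⊔ Wm) ≤ Module.finrank ℂ (Fin n → ℂ) :=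
          Submodule.finrank_le _
      _ = n := hambient
  rw [hWp_rank, hnq] at hle1
  rw [hWm_rank, hnp] at hle2
  rw [hnp, hnq] at hsplit
  constructor
  · rw [hposcount]; omega
  · rw [hnegcount]; omega
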